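/- (Dynamic Grandits–Rheinländer representation.) The density process Z^{Q^F} of the dual minimiser Q^F of I^F_t = essinf_{Q∈M_f}[I_t(Q|ℙ) − α𝔼^Q[F|F_t]] satisfies, for every t ∈ [0,T], Z^{Q^F}_T / Z^{Q^F}_t = exp[ I_t(Q^F|ℙ) − α( 𝔼^{Q^F}[F|F_t] + ∫_t^T θ^F_u · dS_u − F ) ], where θ^F ∈ Θ is the optimal trading strategy in the primal exponential utility maximisation problem with the claim F. -/

import Mathlib

open MeasureTheory ProbabilityTheory Filter Real
open scoped ENNReal Topology

noncomputable section


/-- Supporting-line inequality for the convex function `x ↦ x * log x`. -/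
lemma aux_log_ineq {q x : ℝ} (hq : 0 < q) (hx : 0 ≤ x) :
    q * Real.log q + (Real.log q + 1) * (x - q) ≤ x * Real.log x := by
  rcases eq_or_lt_of_le hx with h | hx
  · rw [← h]
    simp only [Real.log_zero, zero_mul, zero_sub]
    nlinarith
  · have h1 : Real.log (q / x) ≤ q / x - 1 := Real.log_le_sub_one_of_pos (by positivity)
    rw [Real.log_div hq.ne' hx.ne'] at h1
    have h2 : x * (Real.log q - Real.log x) ≤ x * (q / x - 1) :=
      mul_le_mul_of_nonneg_left h1 hx.le
    have h3 : x * (q / x - 1) = q - x := by field_simp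
    nlinarith [h2, h3]

/-- For `x ≥ 0`, `x * |log x| ≤ x * log x + 2`. -/
lemma aux_abs_mul_log {x : ℝ} (hx : 0 ≤ x) : x * |Real.log x| ≤ x * Real.log x + 2 := by
  rcases eq_or_lt_of_le hx with h | hx
  · rw [← h]; norm_num
  rcases le_or_gt 1 x with h1 | h1
  · rw [abs_of_nonneg (Real.log_nonneg h1)]; linarith
  · have hlog : Real.log x ≤ 0 := Real.log_nonpos hx.le h1.le
    rw [abs_of_nonpos hlog]
    have h2 : Real.log x⁻¹ ≤ x⁻¹ - 1 := Real.log_le_sub_one_of_pos (by positivity)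
    rw [Real.log_inv] at h2
    have h3 : x * (-Real.log x) ≤ x * (x⁻¹ - 1) := mul_le_mul_of_nonneg_left h2 hx.le
    have h4 : x * (x⁻¹ - 1) = 1 - x := by field_simp
    nlinarith

/-- Approximation by rationals: the supporting-line bound at all positive rationals
implies the Jensen bound at a positive real. -/
lemma aux_rat_limit {z C : ℝ} (hz : 0 < z)
    (h : ∀ q : ℚ, 0 < (q : ℝ) → (q : ℝ) * Real.log q + (Real.log q + 1) * (z - (q : ℝ)) ≤ C) :
    z * Real.log z ≤ C := by
  have hseq : ∀ n : ℕ, ∃ q : ℚ, |z - (q : ℝ)| < z / (2 * (n + 1)) := fun n =>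
    exists_rat_near z (by positivity)
  choose q hq using hseq
  have hle : ∀ n : ℕ, z / (2 * ((n : ℝ) + 1)) ≤ z / 2 := by
    intro n
    have h2 : (2 : ℝ) ≤ 2 * ((n : ℝ) + 1) := by
      have : (0 : ℝ) ≤ (n : ℝ) := Nat.cast_nonneg n
      nlinarith
    exact div_le_div_of_nonneg_left hz.le two_pos h2
  have hqpos : ∀ n : ℕ, 0 < (q n : ℝ) := by
    intro n
    have h1 := (abs_lt.1 (hq n)).2
    have := hle n
    linarith
  have htend : Tendsto (fun n : ℕ => (q n : ℝ)) atTop (𝓝 z) := by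
    rw [tendsto_iff_dist_tendsto_zero]
    have hb : Tendsto (fun n : ℕ => z / 2 * (1 / ((n : ℝ) + 1))) atTop (𝓝 0) := by
      simpa using tendsto_one_div_add_atTop_nhds_zero_nat.const_mul (z / 2)
    refine squeeze_zero (fun n => dist_nonneg) (fun n => ?_) hb
    rw [Real.dist_eq, abs_sub_comm]
    refine (hq n).le.trans (le_of_eq ?_)
    field_simp
  have hlog : Tendsto (fun n : ℕ => Real.log (q n : ℝ)) atTop (𝓝 (Real.log z)) :=
    (Real.continuousAt_log hz.ne').tendsto.comp htend
  have hLHS : Tendsto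
      (fun n : ℕ => (q n : ℝ) * Real.log (q n) + (Real.log (q n) + 1) * (z - (q n : ℝ)))
      atTop (𝓝 (z * Real.log z + (Real.log z + 1) * (z - z))) :=
    (htend.mul hlog).add ((hlog.add tendsto_const_nhds).mul (tendsto_const_nhds.sub htend))
  have := le_of_tendsto hLHS (Eventually.of_forall fun n => h (q n) (hqpos n))
  simpa using this

/-- `⨆ n, ofReal (min a n) = ofReal a` for `a : ℝ`. -/
lemma aux_iSup_ofReal_min (a : ℝ) :
    (⨆ n : ℕ, ENNReal.ofReal (min a (n : ℝ))) = ENNReal.ofReal a := by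
  apply le_antisymm
  · exact iSup_le fun n => ENNReal.ofReal_le_ofReal (min_le_left _ _)
  · refine le_iSup_of_le ⌈a⌉₊ (le_of_eq ?_)
    rw [min_eq_left (Nat.le_ceil _)]



/-- `X` is a local martingale: there is a localising sequence of stopping times
increasing to `+∞` such that each stopped process is a martingale. -/
def IsLocalMartingale {Ω : Type*} {mΩ : MeasurableSpace Ω} (ℱ : Filtration ℝ mΩ)
    (Q : Measure Ω) (X : ℝ → Ω → ℝ) : Prop :=
  ∃ τ : ℕ → Ω → ℝ, (∀ n, IsStoppingTime ℱ (fun ω => ((τ n ω : ℝ) : WithTop ℝ))) ∧ (∀ ω, Monotone fun n => τ n ω) ∧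
    (∀ᵐ ω ∂Q, Tendsto (fun n => τ n ω) atTop atTop) ∧
    ∀ n, Martingale (fun t ω => X (min t (τ n ω)) ω) ℱ Q

/-- The density process `Z^{Q,μ}_t = 𝔼^μ[dQ/dμ | F_t]` of `Q` with respect to `μ`. -/
def densProc {Ω : Type*} {mΩ : MeasurableSpace Ω} (ℱ : Filtration ℝ mΩ)
    (μ Q : Measure Ω) (t : ℝ) : Ω → ℝ :=
  MeasureTheory.condExp (ℱ t) μ (fun ω => (Q.rnDeriv μ ω).toReal)

/-- The conditional relative entropy process
`I_t(Q|μ) = 𝔼^Q[log (Z^{Q,μ}_T / Z^{Q,μ}_t) | F_t]` between `Q` and `μ`. -/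
def condRelEntropy {Ω : Type*} {mΩ : MeasurableSpace Ω} (ℱ : Filtration ℝ mΩ)
    (μ Q : Measure Ω) (T t : ℝ) : Ω → ℝ :=
  MeasureTheory.condExp (ℱ t) Q
    (fun ω => Real.log (densProc ℱ μ Q T ω / densProc ℱ μ Q t ω))

/-- The set `M_f` of equivalent local martingale measures for `S` with finite
relative entropy with respect to `P`. -/
def Mf {Ω : Type*} {mΩ : MeasurableSpace Ω} (ℱ : Filtration ℝ mΩ) (P : Measure Ω)
    {d : ℕ} (S : ℝ → Ω → Fin d → ℝ) : Set (Measure Ω) :=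
  {Q | IsProbabilityMeasure Q ∧ Q ≪ P ∧ P ≪ Q ∧
    (∀ i, IsLocalMartingale ℱ Q fun t ω => S t ω i) ∧
    Integrable (fun ω => Real.log ((Q.rnDeriv P ω).toReal)) Q}

/-- `Y` is (a version of) the essential supremum under `P` of the family `X i`. -/
def IsEssSupFam {Ω : Type*} {_ : MeasurableSpace Ω} {ι : Sort*} (P : Measure Ω)
    (X : ι → Ω → ℝ) (Y : Ω → ℝ) : Prop :=
  (∀ i, X i ≤ᵐ[P] Y) ∧ ∀ Z : Ω → ℝ, (∀ i, X i ≤ᵐ[P] Z) → Y ≤ᵐ[P] Z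

/-- `Y` is (a version of) the essential infimum under `P` of the family `X i`. -/
def IsEssInfFam {Ω : Type*} {_ : MeasurableSpace Ω} {ι : Sort*} (P : Measure Ω)
    (X : ι → Ω → ℝ) (Y : Ω → ℝ) : Prop :=
  (∀ i, Y ≤ᵐ[P] X i) ∧ ∀ Z : Ω → ℝ, (∀ i, Z ≤ᵐ[P] X i) → Z ≤ᵐ[P] Y

/-- Corollary 4.4: dynamic Grandits–Rheinländer representation.
The density process of the dual minimiser `Q^F` satisfies, for every `t ∈ [0,T]`,
`Z^{Q^F}_T / Z^{Q^F}_t = exp[ I_t(Q^F|P) - α(𝔼^{Q^F}[F|F_t] + ∫_t^T θ^F·dS - F) ]`,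
where `θ^F ∈ Θ` is the primal optimiser. Strategies `θ ∈ Θ` are encoded via their
gains processes `gains θ = θ·S`, which are `Q`-martingales for every `Q ∈ M_f`,
and the Grandits–Rheinländer/Kabanov–Stricker representation
`dQ^F/dP_F = c_F exp(-α(θ^F·S)_T)` is taken as given. -/
theorem dynamic_grandits_rheinlander_representation
    {Ω : Type*} {mΩ : MeasurableSpace Ω} (P : Measure Ω) [IsProbabilityMeasure P]
    (T : ℝ) (hT : 0 < T)
    (ℱ : Filtration ℝ mΩ) (hF0 : ℱ 0 = ⊥) (hFT : ℱ T = mΩ)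
    {d : ℕ} (S : ℝ → Ω → Fin d → ℝ) (hSadapted : Adapted ℱ S)
    (hSpos : ∀ t ω i, 0 < S t ω i)
    (hMf : (Mf ℱ P S).Nonempty)
    (α : ℝ) (hα : 0 < α)
    (F : Ω → ℝ) (hFmeas : Measurable F)
    (hFexp : ∃ ε > 0, Integrable (fun ω => Real.exp ((α + ε) * F ω)) P ∧
      Integrable (fun ω => Real.exp (-ε * F ω)) P)
    (PF : Measure Ω)
    (hPF : PF = P.withDensity (fun ω =>
      ENNReal.ofReal (Real.exp (α * F ω) / ∫ ω', Real.exp (α * F ω') ∂P)))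
    -- the set `Θ` of admissible strategies, encoded through their gains processes
    (Θ : Type*) (gains : Θ → ℝ → Ω → ℝ)
    (hgains0 : ∀ θ ω, gains θ 0 ω = 0)
    (hgainsmart : ∀ θ, ∀ Q ∈ Mf ℱ P S, Martingale (gains θ) ℱ Q)
    -- `θF` : the optimal strategy in the primal problem (maximality of conditional
    -- expected exponential utility over all strategies)
    (θF : Θ)
    (hθFopt : ∀ t ∈ Set.Icc (0:ℝ) T, ∀ θ : Θ,
      MeasureTheory.condExp (ℱ t) P
          (fun ω => -Real.exp (-α * (gains θ T ω - gains θ t ω - F ω)))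
        ≤ᵐ[P] MeasureTheory.condExp (ℱ t) P
          (fun ω => -Real.exp (-α * (gains θF T ω - gains θF t ω - F ω))))
    -- `QF` : the dual minimiser
    (QF : Measure Ω) (hQFmem : QF ∈ Mf ℱ P S)
    (hQFopt : ∀ t ∈ Set.Icc (0:ℝ) T, IsEssInfFam P
      (fun Q : {Q : Measure Ω // Q ∈ Mf ℱ P S} => fun ω =>
        condRelEntropy ℱ P Q.1 T t ω - α * MeasureTheory.condExp (ℱ t) Q.1 F ω)
      (fun ω => condRelEntropy ℱ P QF T t ω - α * MeasureTheory.condExp (ℱ t) QF F ω))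
    -- Property 4.3 (Grandits–Rheinländer / Kabanov–Stricker), taken as given
    (hGR : ∃ c : ℝ, 0 < c ∧
      (fun ω => (QF.rnDeriv PF ω).toReal)
        =ᵐ[P] fun ω => c * Real.exp (-α * gains θF T ω)) :
    ∀ t ∈ Set.Icc (0:ℝ) T,
      (fun ω => densProc ℱ P QF T ω / densProc ℱ P QF t ω)
        =ᵐ[P] fun ω => Real.exp (condRelEntropy ℱ P QF T t ω
          - α * (MeasureTheory.condExp (ℱ t) QF F ω
              + (gains θF T ω - gains θF t ω) - F ω)) := by
  intro t ht
  obtain ⟨ht0, htT⟩ := ht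
  obtain ⟨hQprob, hQP, hPQ, -, hent⟩ := id hQFmem
  haveI := hQprob
  have hm : ℱ t ≤ mΩ := ℱ.le t
  obtain ⟨c, hc, hGR'⟩ := hGR
  obtain ⟨ε, hε, hint1, -⟩ := hFexp
  -- basic facts about the density ρ = (dQF/dP).toReal
  have hρ_meas : Measurable (fun ω => (QF.rnDeriv P ω).toReal) :=
    (Measure.measurable_rnDeriv _ _).ennreal_toReal
  have hρ_int : Integrable (fun ω => (QF.rnDeriv P ω).toReal) P :=
    Measure.integrable_toReal_rnDeriv
  have hρ_pos : ∀ᵐ ω ∂P, 0 < (QF.rnDeriv P ω).toReal := by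
    filter_upwards [Measure.rnDeriv_pos' hPQ, Measure.rnDeriv_lt_top QF P] with ω h1 h2
    exact ENNReal.toReal_pos h1.ne' h2.ne
  -- exp(αF) is integrable and its integral K is positive
  have hexpF_meas : Measurable fun ω => Real.exp (α * F ω) := (measurable_const.mul hFmeas).exp
  have hexp_int : Integrable (fun ω => Real.exp (α * F ω)) P := by
    refine (hint1.add (integrable_const 1)).mono' hexpF_meas.aestronglyMeasurable
      (Eventually.of_forall fun ω => ?_)
    rw [Real.norm_eq_abs, abs_of_pos (Real.exp_pos _)]
    rcases le_or_gt 0 (F ω) with h | h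
    · have h2 : α * F ω ≤ (α + ε) * F ω := by nlinarith
      calc Real.exp (α * F ω) ≤ Real.exp ((α + ε) * F ω) := Real.exp_le_exp.2 h2
        _ ≤ _ := le_add_of_nonneg_right zero_le_one
    · have h2 : α * F ω ≤ 0 := by nlinarith
      calc Real.exp (α * F ω) ≤ 1 := Real.exp_le_one_iff.2 h2
        _ ≤ _ := le_add_of_nonneg_left (Real.exp_pos _).le
  set K := ∫ ω, Real.exp (α * F ω) ∂P with hKdef
  have hK : 0 < K := integral_exp_pos hexp_int
  -- the measure PF is equivalent to P
  have hPF' : PF = P.withDensity fun ω => ENNReal.ofReal (Real.exp (α * F ω) / K) := hPF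
  have hPFdens_meas : Measurable fun ω => ENNReal.ofReal (Real.exp (α * F ω) / K) :=
    (hexpF_meas.div_const K).ennreal_ofReal
  have hPPF : P ≪ PF := by
    rw [hPF']
    exact withDensity_absolutelyContinuous' hPFdens_meas.aemeasurable
      (Eventually.of_forall fun ω => (ENNReal.ofReal_pos.2 (div_pos (Real.exp_pos _) hK)).ne')
  have hQPF : QF ≪ PF := hQP.trans hPPF
  haveI : IsFiniteMeasure PF := by
    rw [hPF']; exact isFiniteMeasure_withDensity_ofReal (hexp_int.div_const K).2
  have hPF_rn : PF.rnDeriv P =ᵐ[P] fun ω => ENNReal.ofReal (Real.exp (α * F ω) / K) := by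
    rw [hPF']; exact Measure.rnDeriv_withDensity P hPFdens_meas
  -- representation of ρ via the Grandits–Rheinländer property
  have hρ_eq : (fun ω => (QF.rnDeriv P ω).toReal)
      =ᵐ[P] fun ω => c * Real.exp (-α * gains θF T ω) * (Real.exp (α * F ω) / K) := by
    filter_upwards [Measure.rnDeriv_mul_rnDeriv hQPF, hPF_rn, hGR',
      hPPF.ae_le (Measure.rnDeriv_lt_top QF PF)] with ω h1 h2 h3 h4
    have hsplit : (QF.rnDeriv P ω).toReal = (QF.rnDeriv PF ω).toReal * (PF.rnDeriv P ω).toReal := by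
      rw [← ENNReal.toReal_mul, ← Pi.mul_apply (QF.rnDeriv PF) (PF.rnDeriv P), h1]
    rw [hsplit, h3, h2, ENNReal.toReal_ofReal (by positivity)]
  have hlogρ : (fun ω => Real.log ((QF.rnDeriv P ω).toReal))
      =ᵐ[P] fun ω => Real.log c - Real.log K - α * gains θF T ω + α * F ω := by
    filter_upwards [hρ_eq] with ω h
    rw [h, Real.log_mul (by positivity) (by positivity),
      Real.log_mul hc.ne' (Real.exp_ne_zero _), Real.log_exp,
      Real.log_div (Real.exp_ne_zero _) hK.ne', Real.log_exp]
    ring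
  -- identify the terminal density process
  have hZT_id : densProc ℱ P QF T = fun ω => (QF.rnDeriv P ω).toReal := by
    have hsm : StronglyMeasurable[ℱ T] fun ω => (QF.rnDeriv P ω).toReal := by
      rw [hFT]; exact hρ_meas.stronglyMeasurable
    exact condExp_of_stronglyMeasurable (ℱ.le T) hsm hρ_int
  -- the density process at time t
  set Zt : Ω → ℝ := densProc ℱ P QF t with hZt_def
  have hZt_eq : Zt = MeasureTheory.condExp (ℱ t) P (fun ω => (QF.rnDeriv P ω).toReal) := rfl
  have hZt_sm : StronglyMeasurable[ℱ t] Zt := stronglyMeasurable_condExp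
  have hZt_meas : Measurable Zt := (hZt_sm.mono hm).measurable
  have hZt_int : Integrable Zt P := integrable_condExp
  have hZt_pos : ∀ᵐ ω ∂P, 0 < Zt ω := by
    have hA : MeasurableSet[ℱ t] {ω | Zt ω ≤ 0} := hZt_sm.measurable measurableSet_Iic
    have h1 : ∫ ω in {ω | Zt ω ≤ 0}, Zt ω ∂P = (QF {ω | Zt ω ≤ 0}).toReal := by
      have e : ∫ ω in {ω | Zt ω ≤ 0}, Zt ω ∂P
          = ∫ ω in {ω | Zt ω ≤ 0}, (QF.rnDeriv P ω).toReal ∂P :=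
        setIntegral_condExp hm hρ_int hA
      rw [e]
      exact Measure.setIntegral_toReal_rnDeriv hQP _
    have h2 : ∫ ω in {ω | Zt ω ≤ 0}, Zt ω ∂P ≤ 0 :=
      setIntegral_nonpos (hm _ hA) fun x hx => hx
    have h3 : (QF {ω | Zt ω ≤ 0}).toReal = 0 :=
      le_antisymm (h1 ▸ h2) ENNReal.toReal_nonneg
    have hQA : QF {ω | Zt ω ≤ 0} = 0 :=
      ((ENNReal.toReal_eq_zero_iff _).1 h3).resolve_right (measure_ne_top _ _)
    have hPA : P {ω | Zt ω ≤ 0} = 0 := hPQ hQA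
    rw [ae_iff]
    convert hPA using 2
    ext ω
    simp [not_lt]
  -- conditional Jensen inequality for x log x
  have hρlogρ_int : Integrable
      (fun ω => (QF.rnDeriv P ω).toReal * Real.log ((QF.rnDeriv P ω).toReal)) P := by
    have h := (integrable_rnDeriv_smul_iff (ν := P)
      (f := fun ω => Real.log ((QF.rnDeriv P ω).toReal)) hQP).2 hent
    simpa [smul_eq_mul] using h
  set W : Ω → ℝ := MeasureTheory.condExp (ℱ t) P
    (fun ω => (QF.rnDeriv P ω).toReal * Real.log ((QF.rnDeriv P ω).toReal)) with hW_def
  have hW_int : Integrable W P := integrable_condExp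
  have hjensen : ∀ᵐ ω ∂P, Zt ω * Real.log (Zt ω) ≤ W ω := by
    have key : ∀ q : ℚ, ∀ᵐ ω ∂P, 0 < (q : ℝ) →
        (q : ℝ) * Real.log q + (Real.log q + 1) * (Zt ω - q) ≤ W ω := by
      intro q
      by_cases hq : 0 < (q : ℝ)
      swap
      · exact Eventually.of_forall fun ω h => absurd h hq
      have hpt : (fun ω => ((q : ℝ) * Real.log q - (Real.log q + 1) * q)
            + (Real.log q + 1) * (QF.rnDeriv P ω).toReal)
          ≤ᵐ[P] fun ω => (QF.rnDeriv P ω).toReal * Real.log ((QF.rnDeriv P ω).toReal) :=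
        Eventually.of_forall fun ω => by
          have h := aux_log_ineq hq (ENNReal.toReal_nonneg (a := QF.rnDeriv P ω))
          dsimp only
          nlinarith [h]
      have haffint : Integrable (fun ω => ((q : ℝ) * Real.log q - (Real.log q + 1) * q)
          + (Real.log q + 1) * (QF.rnDeriv P ω).toReal) P :=
        (integrable_const _).add (hρ_int.const_mul _)
      have hcond := condExp_mono (μ := P) (m := ℱ t) haffint hρlogρ_int hpt
      have haff : MeasureTheory.condExp (ℱ t) P
          (fun ω => ((q : ℝ) * Real.log q - (Real.log q + 1) * q)
            + (Real.log q + 1) * (QF.rnDeriv P ω).toReal)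
          =ᵐ[P] fun ω => ((q : ℝ) * Real.log q - (Real.log q + 1) * q)
            + (Real.log q + 1) * Zt ω := by
        have e1 := condExp_add (μ := P) (m := ℱ t)
          (integrable_const ((q : ℝ) * Real.log q - (Real.log q + 1) * q))
          (hρ_int.const_mul (Real.log q + 1))
        have e2a : (fun ω => (Real.log q + 1) * (QF.rnDeriv P ω).toReal)
            =ᵐ[P] ((Real.log q + 1) • fun ω => (QF.rnDeriv P ω).toReal) :=
          Eventually.of_forall fun ω => rfl
        have e2b := condExp_smul (μ := P) (m := ℱ t) (Real.log q + 1)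
          (fun ω => (QF.rnDeriv P ω).toReal)
        have e2 : MeasureTheory.condExp (ℱ t) P
            (fun ω => (Real.log q + 1) * (QF.rnDeriv P ω).toReal)
            =ᵐ[P] fun ω => (Real.log q + 1) * Zt ω :=
          (condExp_congr_ae e2a).trans (e2b.trans (Eventually.of_forall fun ω => rfl))
        have e3 := condExp_const (μ := P) hm ((q : ℝ) * Real.log q - (Real.log q + 1) * q)
        refine e1.trans ?_
        filter_upwards [e2] with ω h2
        simp only [Pi.add_apply, e3, h2]
      filter_upwards [hcond, haff] with ω h1 h2 _
      have hring : (q : ℝ) * Real.log q + (Real.log q + 1) * (Zt ω - q)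
          = ((q : ℝ) * Real.log q - (Real.log q + 1) * q) + (Real.log q + 1) * Zt ω := by
        ring
      rw [hring, ← h2]
      exact h1
    have hall := ae_all_iff.2 key
    filter_upwards [hall, hZt_pos] with ω hω hZ
    exact aux_rat_limit hZ fun q hq => hω q hq
  -- log Zt is QF-integrable
  have hlogZt_m : StronglyMeasurable[ℱ t] fun ω => Real.log (Zt ω) :=
    hZt_sm.measurable.log.stronglyMeasurable
  have hlogZt_meas : Measurable fun ω => Real.log (Zt ω) := Real.measurable_log.comp hZt_meas
  have hhn_int_QF : ∀ n : ℕ, Integrable (fun ω => min |Real.log (Zt ω)| (n : ℝ)) QF := by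
    intro n
    refine (integrable_const (n : ℝ)).mono' (hlogZt_meas.abs.min measurable_const).aestronglyMeasurable
      (Eventually.of_forall fun ω => ?_)
    rw [Real.norm_eq_abs, abs_of_nonneg (le_min (abs_nonneg _) (Nat.cast_nonneg n))]
    exact min_le_right _ _
  have hhn_bound : ∀ n : ℕ, ∫ ω, min |Real.log (Zt ω)| (n : ℝ) ∂QF ≤ ∫ ω, W ω ∂P + 2 := by
    intro n
    have hhn_m : StronglyMeasurable[ℱ t] fun ω => min |Real.log (Zt ω)| (n : ℝ) := by
      have h0 : Measurable[ℱ t] fun ω => Real.log (Zt ω) := hZt_sm.measurable.log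
      have h1 : Measurable[ℱ t] fun ω => |Real.log (Zt ω)| := measurable_abs.comp h0
      have h2 : Measurable[ℱ t] fun _ : Ω => (n : ℝ) := measurable_const
      exact (h1.min h2).stronglyMeasurable
    have hhn_bdd : ∃ C, ∀ ω, ‖min |Real.log (Zt ω)| (n : ℝ)‖ ≤ C := by
      refine ⟨(n : ℝ), fun ω => ?_⟩
      rw [Real.norm_eq_abs, abs_of_nonneg (le_min (abs_nonneg _) (Nat.cast_nonneg n))]
      exact min_le_right _ _
    have hhn_meas : AEStronglyMeasurable (fun ω => min |Real.log (Zt ω)| (n : ℝ)) P :=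
      (hlogZt_meas.abs.min measurable_const).aestronglyMeasurable
    have hmulρ_int : Integrable
        (fun ω => min |Real.log (Zt ω)| (n : ℝ) * (QF.rnDeriv P ω).toReal) P :=
      hρ_int.bdd_mul hhn_meas (Eventually.of_forall hhn_bdd.choose_spec)
    have hmulZ_int : Integrable (fun ω => min |Real.log (Zt ω)| (n : ℝ) * Zt ω) P :=
      hZt_int.bdd_mul hhn_meas (Eventually.of_forall hhn_bdd.choose_spec)
    have e1 : ∫ ω, min |Real.log (Zt ω)| (n : ℝ) ∂QF
        = ∫ ω, (QF.rnDeriv P ω).toReal * min |Real.log (Zt ω)| (n : ℝ) ∂P := by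
      rw [← integral_rnDeriv_smul hQP]
      try rfl
      try simp [smul_eq_mul]
    have hpull := condExp_mul_of_stronglyMeasurable_left (μ := P) hhn_m hmulρ_int hρ_int
    have e2 : ∫ ω, (QF.rnDeriv P ω).toReal * min |Real.log (Zt ω)| (n : ℝ) ∂P
        = ∫ ω, min |Real.log (Zt ω)| (n : ℝ) * Zt ω ∂P := by
      calc ∫ ω, (QF.rnDeriv P ω).toReal * min |Real.log (Zt ω)| (n : ℝ) ∂P
          = ∫ ω, min |Real.log (Zt ω)| (n : ℝ) * (QF.rnDeriv P ω).toReal ∂P := by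
            congr 1; ext ω; ring
        _ = ∫ ω, (MeasureTheory.condExp (ℱ t) P
              (fun ω => min |Real.log (Zt ω)| (n : ℝ) * (QF.rnDeriv P ω).toReal)) ω ∂P :=
            (integral_condExp hm).symm
        _ = ∫ ω, min |Real.log (Zt ω)| (n : ℝ) * Zt ω ∂P := by
            refine integral_congr_ae (hpull.trans ?_)
            rw [hZt_eq]
            exact Eventually.of_forall fun ω => rfl
    have e3 : ∫ ω, min |Real.log (Zt ω)| (n : ℝ) * Zt ω ∂P ≤ ∫ ω, (W ω + 2) ∂P := by
      refine integral_mono_ae hmulZ_int (hW_int.add (integrable_const 2)) ?_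
      filter_upwards [hjensen, hZt_pos] with ω hj hz
      have h1 : min |Real.log (Zt ω)| (n : ℝ) * Zt ω ≤ |Real.log (Zt ω)| * Zt ω :=
        mul_le_mul_of_nonneg_right (min_le_left _ _) hz.le
      have h2 : Zt ω * |Real.log (Zt ω)| ≤ Zt ω * Real.log (Zt ω) + 2 := aux_abs_mul_log hz.le
      show min |Real.log (Zt ω)| (n : ℝ) * Zt ω ≤ W ω + 2
      nlinarith
    have e4 : ∫ ω, (W ω + 2) ∂P = ∫ ω, W ω ∂P + 2 := by
      rw [integral_add hW_int (integrable_const 2), integral_const]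
      simp
    rw [e1, e2]
    rw [e4] at e3
    exact e3
  have hlogZt_int_QF : Integrable (fun ω => Real.log (Zt ω)) QF := by
    refine ⟨hlogZt_meas.aestronglyMeasurable, ?_⟩
    rw [hasFiniteIntegral_iff_norm]
    have hmono : Monotone fun (n : ℕ) (ω : Ω) => ENNReal.ofReal (min |Real.log (Zt ω)| (n : ℝ)) :=
      fun a b hab ω => ENNReal.ofReal_le_ofReal (min_le_min le_rfl (Nat.cast_le.2 hab))
    calc ∫⁻ ω, ENNReal.ofReal ‖Real.log (Zt ω)‖ ∂QF
        = ∫⁻ ω, ⨆ n : ℕ, ENNReal.ofReal (min |Real.log (Zt ω)| (n : ℝ)) ∂QF := by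
          refine lintegral_congr fun ω => ?_
          rw [aux_iSup_ofReal_min, Real.norm_eq_abs]
      _ = ⨆ n : ℕ, ∫⁻ ω, ENNReal.ofReal (min |Real.log (Zt ω)| (n : ℝ)) ∂QF :=
          lintegral_iSup (fun n => (hlogZt_meas.abs.min measurable_const).ennreal_ofReal) hmono
      _ ≤ ⨆ _ : ℕ, ENNReal.ofReal (∫ ω, W ω ∂P + 2) := by
          refine iSup_mono fun n => ?_
          rw [← ofReal_integral_eq_lintegral_ofReal (hhn_int_QF n)
            (Eventually.of_forall fun ω => le_min (abs_nonneg _) (Nat.cast_nonneg n))]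
          exact ENNReal.ofReal_le_ofReal (hhn_bound n)
      _ < ⊤ := by
          rw [ciSup_const]
          exact ENNReal.ofReal_lt_top
  -- martingale property of the gains process under QF
  have M : Martingale (gains θF) ℱ QF := hgainsmart θF QF hQFmem
  have hGT_int : Integrable (gains θF T) QF := M.integrable T
  have hGt_int : Integrable (gains θF t) QF := M.integrable t
  have hmart : MeasureTheory.condExp (ℱ t) QF (gains θF T) =ᵐ[QF] gains θF t :=
    M.condExp_ae_eq htT
  -- transfer a.e. facts to QF
  have hlogρ_Q := hQP.ae_le hlogρ
  have hρ_pos_Q := hQP.ae_le hρ_pos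
  have hZt_pos_Q := hQP.ae_le hZt_pos
  -- F is QF-integrable
  have hF_int_QF : Integrable F QF := by
    have h1 : Integrable (fun ω => α⁻¹ * ((Real.log ((QF.rnDeriv P ω).toReal)
        - Real.log c + Real.log K) + α * gains θF T ω)) QF :=
      (((hent.sub (integrable_const _)).add (integrable_const _)).add
        (hGT_int.const_mul α)).const_mul α⁻¹
    refine h1.congr ?_
    filter_upwards [hlogρ_Q] with ω h
    rw [h]
    field_simp
    ring
  -- the conditional entropy integrand
  have hIdef : condRelEntropy ℱ P QF T t = MeasureTheory.condExp (ℱ t) QF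
      (fun ω => Real.log ((QF.rnDeriv P ω).toReal / Zt ω)) := by
    rw [condRelEntropy, hZT_id]
  -- decompose the integrand
  set v : Ω → ℝ := fun ω => Real.log c - Real.log K - Real.log (Zt ω) with hv_def
  have hv_int : Integrable v QF := (integrable_const _).sub hlogZt_int_QF
  have hv_sm : StronglyMeasurable[ℱ t] v :=
    (stronglyMeasurable_const.sub hlogZt_m)
  have hg_eq : (fun ω => Real.log ((QF.rnDeriv P ω).toReal / Zt ω))
      =ᵐ[QF] (-α) • gains θF T + α • F + v := by
    filter_upwards [hρ_pos_Q, hZt_pos_Q, hlogρ_Q] with ω h1 h2 h3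
    simp only [Pi.add_apply, Pi.smul_apply, smul_eq_mul, hv_def]
    rw [Real.log_div h1.ne' h2.ne', h3]
    ring
  have hcond_big : MeasureTheory.condExp (ℱ t) QF
      (fun ω => Real.log ((QF.rnDeriv P ω).toReal / Zt ω))
      =ᵐ[QF] (-α) • gains θF t + α • MeasureTheory.condExp (ℱ t) QF F + v := by
    refine (condExp_congr_ae hg_eq).trans ?_
    have hsum1 : Integrable ((-α) • gains θF T + α • F) QF :=
      (hGT_int.smul (-α)).add (hF_int_QF.smul α)
    refine (condExp_add hsum1 hv_int (ℱ t)).trans ?_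
    have ev : MeasureTheory.condExp (ℱ t) QF v = v :=
      condExp_of_stronglyMeasurable hm hv_sm hv_int
    have e12 := condExp_add (μ := QF) (m := ℱ t) (hGT_int.smul (-α)) (hF_int_QF.smul α)
    have eGT := condExp_smul (μ := QF) (m := ℱ t) (-α) (gains θF T)
    have eF := condExp_smul (μ := QF) (m := ℱ t) α F
    filter_upwards [e12, eGT, eF, hmart] with ω h12 hGT hF hmt
    simp only [Pi.add_apply, Pi.smul_apply, smul_eq_mul] at h12 hGT hF ⊢
    rw [h12, hGT, hF, ev, hmt]
  -- conclude, transferring back to P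
  have hPbig := hPQ.ae_le hcond_big
  filter_upwards [hPbig, hρ_pos, hZt_pos, hlogρ] with ω h1 h2 h3 h4
  have hZTω : densProc ℱ P QF T ω = (QF.rnDeriv P ω).toReal := congrFun hZT_id ω
  have hIω : condRelEntropy ℱ P QF T t ω
      = MeasureTheory.condExp (ℱ t) QF (fun ω => Real.log ((QF.rnDeriv P ω).toReal / Zt ω)) ω :=
    congrFun hIdef ω
  simp only [Pi.add_apply, Pi.smul_apply, smul_eq_mul, hv_def] at h1
  have h4' : Real.log ((QF.rnDeriv P ω).toReal)
      = Real.log c - Real.log K - α * gains θF T ω + α * F ω := h4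
  have hexp_eq : condRelEntropy ℱ P QF T t ω
      - α * (MeasureTheory.condExp (ℱ t) QF F ω + (gains θF T ω - gains θF t ω) - F ω)
      = Real.log ((QF.rnDeriv P ω).toReal) - Real.log (Zt ω) := by
    rw [hIω, h1, h4']
    ring
  show densProc ℱ P QF T ω / Zt ω = _
  rw [hexp_eq, Real.exp_sub, Real.exp_log h2, Real.exp_log h3, hZTω]
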